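/- If after a call sequence σ agent a is familiar with the secret B of a different agent b, then there exists a chain of distinct agents a₁ = b, a₂, …, a_k = a (2 ≤ k ≤ n) such that for each consecutive pair, each is familiar with the other's secret after σ (i.e., F_{a_h} A_{h+1} and F_{a_{h+1}} A_h hold). -/

import Mathlib

/-- A call is an ordered pair of distinct agents (caller, callee). -/
def Call (n : ℕ) : Type := {p : Fin n × Fin n // p.1 ≠ p.2}

namespace Gossip

variable {n : ℕ}

/-- The caller of a call. -/
def caller (c : Call n) : Fin n := c.1.1

/-- The callee of a call. -/
def callee (c : Call n) : Fin n := c.1.2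

/-- Agent `a` is involved in call `c`. -/
def involves (c : Call n) (a : Fin n) : Prop := a = caller c ∨ a = callee c

/-- A gossip situation assigns to each agent the set of secrets it is familiar with;
secrets are identified with the agents holding them. -/
def Situation (n : ℕ) := Fin n → Finset (Fin n)

/-- The initial gossip situation: every agent only holds its own secret. -/
def root : Situation n := fun a => {a}

/-- The effect of a call on a gossip situation: caller and callee share their secrets. -/
def applyCall (c : Call n) (s : Situation n) : Situation n :=
  fun x => if x = caller c ∨ x = callee c then s (caller c) ∪ s (callee c) else s x

/-- The effect of a call sequence on a gossip situation. -/
def applySeq (σ : List (Call n)) (s : Situation n) : Situation n :=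
  σ.foldl (fun t c => applyCall c t) s

end Gossip


namespace Gossip

variable {n : ℕ}

lemma subset_applyCall (c : Call n) (s : Situation n) (x : Fin n) :
    s x ⊆ applyCall c s x := by
  intro y hy
  unfold applyCall
  split
  · rename_i hx
    rcases hx with h | h <;> subst h <;> simp [Finset.mem_union, hy]
  · exact hy

lemma self_mem_applySeq (σ : List (Call n)) :
    ∀ (s : Situation n), (∀ x, x ∈ s x) → ∀ x, x ∈ applySeq σ s x := by
  induction σ with
  | nil => intro s hs x; exact hs x
  | cons c σ ih =>
    intro s hs x
    exact ih _ (fun y => subset_applyCall c s y (hs y)) x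

lemma self_mem_root (x : Fin n) : x ∈ (root : Situation n) x := by simp [root]

lemma applySeq_concat (τ : List (Call n)) (c : Call n) (s : Situation n) :
    applySeq (τ ++ [c]) s = applyCall c (applySeq τ s) := by
  simp [applySeq]

lemma mono_concat (τ : List (Call n)) (c : Call n) (x : Fin n) :
    applySeq τ (root : Situation n) x ⊆ applySeq (τ ++ [c]) root x := by
  rw [applySeq_concat]
  exact subset_applyCall c _ x

/-- Mutual familiarity after `σ`. -/
def Mut (σ : List (Call n)) (x y : Fin n) : Prop :=
  y ∈ applySeq σ root x ∧ x ∈ applySeq σ root y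

lemma mut_mono (τ : List (Call n)) (c : Call n) {x y : Fin n} (h : Mut τ x y) :
    Mut (τ ++ [c]) x y :=
  ⟨mono_concat τ c x h.1, mono_concat τ c y h.2⟩

lemma chain_exists (σ : List (Call n)) :
    ∀ a b : Fin n, b ∈ applySeq σ root a →
    ∃ l : List (Fin n), l.Nodup ∧ l ≠ [] ∧ l.head? = some b ∧ l.getLast? = some a ∧
      l.Chain' (Mut σ) := by
  induction σ using List.reverseRecOn with
  | nil =>
    intro a b h
    simp only [applySeq, List.foldl_nil, root, Finset.mem_singleton] at h
    subst h
    exact ⟨[b], by simp, by simp, by simp, by simp, List.isChain_singleton b⟩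
  | append_singleton τ c ih =>
    intro a b h
    rw [applySeq_concat] at h
    unfold applyCall at h
    split at h
    case isFalse =>
      obtain ⟨l, h1, h2, h3, h4, h5⟩ := ih a b h
      exact ⟨l, h1, h2, h3, h4, h5.imp (fun x y => mut_mono τ c)⟩
    case isTrue ha =>
      -- a is involved in the call; let w be the other participant
      set w : Fin n := if a = caller c then callee c else caller c with hw
      have hwc : (a = caller c ∧ w = callee c) ∨ (a = callee c ∧ w = caller c) := by
        rcases ha with ha | ha
        · exact Or.inl ⟨ha, by simp [hw, ha]⟩
        · refine Or.inr ⟨ha, ?_⟩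
          have hne : a ≠ caller c := by rw [ha]; exact fun h' => c.2 h'.symm
          simp [hw, hne]
      have hbw : b ∈ applySeq τ root a ∪ applySeq τ root w := by
        rcases hwc with ⟨ha1, ha2⟩ | ⟨ha1, ha2⟩ <;> rw [ha1, ha2] <;>
          first
          | exact h
          | (rw [Finset.union_comm]; exact h)
      -- after the call, a and w are mutually familiar
      have haw : Mut (τ ++ [c]) a w := by
        have hsub : ∀ x, x = caller c ∨ x = callee c →
            applySeq τ root (caller c) ∪ applySeq τ root (callee c)
              ⊆ applySeq (τ ++ [c]) root x := by
          intro x hx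
          rw [applySeq_concat]
          unfold applyCall
          simp [hx]
        have hmemu : caller c ∈ applySeq τ root (caller c) ∪ applySeq τ root (callee c) :=
          Finset.mem_union_left _ (self_mem_applySeq τ root (fun x => self_mem_root x) _)
        have hmemv : callee c ∈ applySeq τ root (caller c) ∪ applySeq τ root (callee c) :=
          Finset.mem_union_right _ (self_mem_applySeq τ root (fun x => self_mem_root x) _)
        have hwin : w = caller c ∨ w = callee c := by
          rcases hwc with ⟨_, h'⟩ | ⟨_, h'⟩ <;> [exact Or.inr h'; exact Or.inl h']
        constructor
        · exact hsub a ha (by rcases hwin with h' | h' <;> rw [h'] <;> assumption)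
        · exact hsub w hwin (by rcases ha with h' | h' <;> rw [h'] <;> assumption)
      rcases Finset.mem_union.mp hbw with hb | hb
      · obtain ⟨l, h1, h2, h3, h4, h5⟩ := ih a b hb
        exact ⟨l, h1, h2, h3, h4, h5.imp (fun x y => mut_mono τ c)⟩
      · obtain ⟨l, h1, h2, h3, h4, h5⟩ := ih w b hb
        have h5' : l.Chain' (Mut (τ ++ [c])) := h5.imp (fun x y => mut_mono τ c)
        by_cases hal : a ∈ l
        · -- take the prefix of l up to the first occurrence of a
          obtain ⟨i, hi, hgeti⟩ := List.getElem_of_mem hal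
          have hlen : (l.take (i + 1)).length = i + 1 := by
            rw [List.length_take]
            omega
          refine ⟨l.take (i + 1), h1.sublist (List.take_sublist _ _), ?_, ?_, ?_, ?_⟩
          · intro hnil
            rw [hnil] at hlen
            simp at hlen
          · cases l with
            | nil => simp at h2
            | cons x t => simpa using h3
          · rw [List.getLast?_eq_getElem?, hlen]
            simp only [Nat.add_sub_cancel]
            rw [List.getElem?_take]
            simp [List.getElem?_eq_getElem hi, hgeti]
          · exact h5'.take _
        · -- append a to the end of l
          refine ⟨l ++ [a], ?_, by simp, ?_, by simp, ?_⟩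
          · simp [List.nodup_append, h1, hal]
            exact fun x hx hxa => hal (hxa ▸ hx)
          · rw [List.head?_append_of_ne_nil _ h2]; exact h3
          · show List.IsChain _ _
            rw [List.isChain_append]
            refine ⟨h5', by simp, ?_⟩
            intro x hx y hy
            rw [h4] at hx
            simp at hx hy
            subst hx; subst hy
            exact ⟨haw.2, haw.1⟩

end Gossip

open Gossip

/-- if agent `a` is familiar with the secret of a different agent `b`
after `σ`, then there is a chain of distinct agents from `b` to `a` in which each
pair of consecutive agents are mutually familiar with each other's secrets. -/
theorem familiarity_chain {n : ℕ} (hn : 3 ≤ n) (σ : List (Call n))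
    (a b : Fin n) (hab : a ≠ b) (h : b ∈ applySeq σ root a) :
    ∃ l : List (Fin n), l.Nodup ∧ 2 ≤ l.length ∧ l.length ≤ n ∧
      l.head? = some b ∧ l.getLast? = some a ∧
      ∀ (i : ℕ) (hi : i + 1 < l.length),
        (l[i + 1] ∈ applySeq σ root (l[i]'(by omega))) ∧
        ((l[i]'(by omega)) ∈ applySeq σ root l[i + 1]) := by
  obtain ⟨l, h1, h2, h3, h4, h5⟩ := Gossip.chain_exists σ a b h
  refine ⟨l, h1, ?_, ?_, h3, h4, ?_⟩
  · match l, h3, h4 with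
    | [x], h3, h4 =>
      simp at h3 h4
      exact absurd (h4.symm.trans h3) hab
    | x :: y :: t, _, _ => simp
  · simpa using h1.length_le_card
  · intro i hi
    have := List.isChain_iff_getElem.mp h5 i (by omega)
    exact this
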